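/- Among all accepting runs of the product automaton with finite cost, there exists an accepting run in prefix-suffix structure (a finite prefix from an initial state to an accepting state f, followed by infinite periodic repetition of a finite cycle at f containing no other occurrence of f) whose cost is less than or equal to the infimum of costs over all accepting runs. -/

import Mathlib

open scoped Classical

/-- Cumulative time sequence of a run. -/
def timeSeq {V : Type*} (w : V → V → ℝ) (r : ℕ → V) : ℕ → ℝ
  | 0 => 0
  | n + 1 => timeSeq w r n + w (r n) (r (n+1))

/-- Cost of an infinite run: limsup of gaps between consecutive visit times to
`Sπ`; `⊤` if `Sπ` is visited only finitely often. -/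
noncomputable def runCost {V : Type*} (w : V → V → ℝ) (Sπ : Set V) (r : ℕ → V) : EReal :=
  if {i | r i ∈ Sπ}.Infinite then
    Filter.limsup
      (fun n => ((timeSeq w r (Nat.nth (fun i => r i ∈ Sπ) (n+1))
        - timeSeq w r (Nat.nth (fun i => r i ∈ Sπ) n) : ℝ) : EReal))
      Filter.atTop
  else ⊤

/-- A run of the product automaton: starts at an initial state and follows edges. -/
def IsRun {V : Type*} (E : V → V → Prop) (S0 : Set V) (r : ℕ → V) : Prop :=
  r 0 ∈ S0 ∧ ∀ i, E (r i) (r (i+1))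

/-- A run is accepting if it visits the accepting set infinitely often. -/
def IsAccepting {V : Type*} (F : Set V) (r : ℕ → V) : Prop :=
  ∀ N, ∃ n ≥ N, r n ∈ F

/-- Prefix-suffix structure: a finite prefix reaching an accepting state `f = r N`
(with no earlier occurrence of `f`), followed by the infinite periodic repetition
of a finite cycle at `f` containing no other occurrence of `f`. -/
def IsPrefixSuffix {V : Type*} (F : Set V) (r : ℕ → V) : Prop :=
  ∃ N T, 0 < T ∧ r N ∈ F ∧
    (∀ i < N, r i ≠ r N) ∧
    (∀ i ≥ N, r (i + T) = r i) ∧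
    (∀ i, N < i → i < N + T → r i ≠ r N)

namespace OptAux

open Filter

/-- Sum of weights over the segment `[a, a+len)`. -/
def segSum {V : Type*} (w : V → V → ℝ) (r : ℕ → V) (a len : ℕ) : ℝ :=
  ∑ x ∈ Finset.range len, w (r (a + x)) (r (a + x + 1))

variable {V : Type*} (w : V → V → ℝ) (r : ℕ → V)

lemma timeSeq_add_segSum (a len : ℕ) :
    timeSeq w r (a + len) = timeSeq w r a + segSum w r a len := by
  induction len with
  | zero => simp [segSum]
  | succ n ih =>
    show timeSeq w r ((a+n)+1) = _
    rw [timeSeq, ih]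
    unfold segSum
    rw [Finset.sum_range_succ]
    ring

lemma segSum_sub (a b : ℕ) (hab : a ≤ b) :
    segSum w r a (b - a) = timeSeq w r b - timeSeq w r a := by
  have := timeSeq_add_segSum w r a (b - a)
  rw [Nat.add_sub_cancel' hab] at this
  linarith

lemma segSum_ge {m : ℝ} (hm : ∀ u v, m ≤ w u v) (a len : ℕ) :
    (len : ℝ) * m ≤ segSum w r a len := by
  have := Finset.card_nsmul_le_sum (Finset.range len)
    (fun x => w (r (a + x)) (r (a + x + 1))) m (fun x _ => hm _ _)
  simpa [nsmul_eq_mul, segSum] using this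

lemma segSum_congr {r2 : ℕ → V} (a a2 len : ℕ)
    (h : ∀ x ≤ len, r (a + x) = r2 (a2 + x)) :
    segSum w r a len = segSum w r2 a2 len := by
  unfold segSum
  refine Finset.sum_congr rfl fun x hx => ?_
  rw [Finset.mem_range] at hx
  rw [h x (le_of_lt hx), show a + x + 1 = a + (x+1) from rfl,
    h (x+1) hx, show a2 + (x+1) = a2 + x + 1 from rfl]

lemma segSum_split (a l1 l2 : ℕ) :
    segSum w r a (l1 + l2) = segSum w r a l1 + segSum w r (a + l1) l2 := by
  induction l2 with
  | zero => simp [segSum]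
  | succ n ih =>
    rw [show l1 + (n+1) = (l1 + n) + 1 from rfl]
    unfold segSum
    rw [Finset.sum_range_succ, Finset.sum_range_succ]
    unfold segSum at ih
    rw [ih, show a + (l1+n) = a + l1 + n from (Nat.add_assoc a l1 n).symm]
    ring

/-- Two consecutive elements of the set `{n | p n}`. -/
def Consec (p : ℕ → Prop) (q q' : ℕ) : Prop :=
  p q ∧ p q' ∧ q < q' ∧ ∀ m, q < m → m < q' → ¬ p m

lemma consec_nth {p : ℕ → Prop} (hp : (setOf p).Infinite) (n : ℕ) :
    Consec p (Nat.nth p n) (Nat.nth p (n+1)) := by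
  refine ⟨Nat.nth_mem_of_infinite hp n, Nat.nth_mem_of_infinite hp (n+1),
    (Nat.nth_lt_nth hp).2 (Nat.lt_succ_self n), fun m h1 h2 hm => ?_⟩
  have hm' : Nat.nth p (Nat.count p m) = m := Nat.nth_count hm
  rw [← hm'] at h1 h2
  have := (Nat.nth_lt_nth hp).1 h1
  have := (Nat.nth_lt_nth hp).1 h2
  omega

lemma consec_unique {p : ℕ → Prop} {q q1 q2 : ℕ}
    (h1 : Consec p q q1) (h2 : Consec p q q2) : q1 = q2 := by
  rcases lt_trichotomy q1 q2 with h | h | h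
  · exact absurd h1.2.1 (h2.2.2.2 _ h1.2.2.1 h)
  · exact h
  · exact absurd h2.2.1 (h1.2.2.2 _ h2.2.2.1 h)

lemma consec_exists {p : ℕ → Prop} (hp : (setOf p).Infinite) {q : ℕ} (hq : p q) :
    ∃ q', Consec p q q' := by
  have h := consec_nth hp (Nat.count p q)
  rw [Nat.nth_count hq] at h
  exact ⟨_, h⟩

lemma consec_index {p : ℕ → Prop} (hp : (setOf p).Infinite) {q q' : ℕ} {n0 : ℕ}
    (h : Consec p q q') (hq : Nat.nth p n0 ≤ q) :
    ∃ k, n0 ≤ k ∧ Nat.nth p k = q ∧ Nat.nth p (k+1) = q' := by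
  refine ⟨Nat.count p q, ?_, Nat.nth_count h.1, ?_⟩
  · have := (Nat.nth_le_nth hp (k := n0) (n := Nat.count p q)).1
      (by rw [Nat.nth_count h.1]; exact hq)
    exact this
  · have h' := consec_nth hp (Nat.count p q)
    rw [Nat.nth_count h.1] at h'
    exact consec_unique h' h

lemma infinite_of_unbounded {P : ℕ → Prop} (h : ∀ M, ∃ n, M ≤ n ∧ P n) :
    (setOf P).Infinite :=
  Set.infinite_of_forall_exists_gt fun a => by
    obtain ⟨n, hn, hPn⟩ := h (a+1); exact ⟨n, hPn, by omega⟩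

/-- limsup of a sequence eventually taking values in a finite set lies in that set. -/
lemma limsup_mem_of_eventually_mem {u : ℕ → EReal} {S : Set EReal} (hS : S.Finite)
    (h : ∀ᶠ n in atTop, u n ∈ S) : limsup u atTop ∈ S := by
  have hS' : {x ∈ S | ∃ᶠ n in atTop, u n = x}.Finite := hS.subset (Set.sep_subset _ _)
  have hne : {x ∈ S | ∃ᶠ n in atTop, u n = x}.Nonempty := by
    by_contra hemp
    rw [Set.not_nonempty_iff_eq_empty] at hemp
    have : ∀ x ∈ S, ∀ᶠ n in atTop, u n ≠ x := by
      intro x hx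
      rw [← Filter.not_frequently]
      intro hf
      exact Set.eq_empty_iff_forall_notMem.1 hemp x ⟨hx, hf⟩
    have h2 := (hS.eventually_all (l := atTop) (p := fun x n => u n ≠ x)).2 this
    have := h.and h2
    rw [Filter.eventually_iff_exists_mem] at this
    obtain ⟨v, hv, hv2⟩ := this
    obtain ⟨n, hn⟩ := Filter.nonempty_of_mem hv
    exact (hv2 n hn).2 (u n) (hv2 n hn).1 rfl
  obtain ⟨x, hx, hxmax⟩ := Set.exists_max_image _ id hS' hne
  have hle : limsup u atTop ≤ x := by
    have : ∀ y ∈ S, ¬(∃ᶠ n in atTop, u n = y) → ∀ᶠ n in atTop, u n ≠ y := by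
      intro y hy hny
      rwa [Filter.not_frequently] at hny
    have h2 : ∀ᶠ n in atTop, ∀ y ∈ S, (¬ ∃ᶠ m in atTop, u m = y) → u n ≠ y := by
      rw [hS.eventually_all]
      intro y hy
      by_cases hc : ∃ᶠ m in atTop, u m = y
      · exact Filter.Eventually.of_forall fun n hn => absurd hc hn
      · exact (this y hy hc).mono fun n hn _ => hn
    refine Filter.limsup_le_of_le (h := ?_)
    filter_upwards [h, h2] with n hn h2n
    by_cases hc : ∃ᶠ m in atTop, u m = u n
    · exact hxmax _ ⟨hn, hc⟩
    · exact absurd rfl (h2n (u n) hn hc)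
  have hge : x ≤ limsup u atTop :=
    Filter.le_limsup_of_frequently_le (hx.2.mono fun n hn => hn.ge)
  exact (le_antisymm hle hge) ▸ hx.1

section
open Filter
open scoped Pointwise

variable {V : Type*} (w : V → V → ℝ) (r : ℕ → V)

/-- Finite set of all sums of at most `n` weights from `W`. -/
noncomputable def GF (W : Finset ℝ) : ℕ → Finset ℝ
  | 0 => {0}
  | n + 1 => GF W n ∪ (GF W n + W)

lemma zero_mem_GF (W : Finset ℝ) : ∀ n, (0:ℝ) ∈ GF W n
  | 0 => by simp [GF]
  | n + 1 => by simp only [GF, Finset.mem_union]; exact Or.inl (zero_mem_GF W n)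

lemma segSum_mem_GF {W : Finset ℝ} (hW : ∀ u v, w u v ∈ W) :
    ∀ (n : ℕ) (a len : ℕ), len ≤ n → segSum w r a len ∈ GF W n := by
  intro n
  induction n with
  | zero =>
    intro a len hlen
    interval_cases len
    simp [segSum, GF]
  | succ n ih =>
    intro a len hlen
    match len with
    | 0 =>
      have h0 : segSum w r a 0 = 0 := by simp [segSum]
      rw [h0]; exact zero_mem_GF W (n+1)
    | Nat.succ l =>
      have h1 : segSum w r a (1 + l) = segSum w r a 1 + segSum w r (a + 1) l :=
        segSum_split w r a 1 l
      show segSum w r a (l + 1) ∈ GF W (n+1)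
      rw [show (1:ℕ) + l = l + 1 from by omega] at h1
      rw [h1]
      have h2 : segSum w r a 1 = w (r a) (r (a + 1)) := by simp [segSum]
      have h3 : segSum w r (a+1) l ∈ GF W n := ih (a+1) l (by omega)
      rw [h2, add_comm (w (r a) (r (a+1)))]
      rw [show GF W (n+1) = GF W n ∪ (GF W n + W) from rfl, Finset.mem_union]
      exact Or.inr (Finset.add_mem_add h3 (hW _ _))

lemma runCost_ge (Sπ : Set V) {m : ℝ} (hm0 : 0 ≤ m) (hm : ∀ u v, m ≤ w u v) :
    (m : EReal) ≤ runCost w Sπ r := by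
  unfold runCost
  split_ifs with hinf
  · refine Filter.le_limsup_of_frequently_le ?_
    apply Filter.Eventually.frequently
    apply Filter.Eventually.of_forall
    intro n
    have hlt : Nat.nth (fun i => r i ∈ Sπ) n < Nat.nth (fun i => r i ∈ Sπ) (n+1) :=
      (Nat.nth_lt_nth hinf).2 (Nat.lt_succ_self n)
    have hs := segSum_ge w r hm (Nat.nth (fun i => r i ∈ Sπ) n)
      (Nat.nth (fun i => r i ∈ Sπ) (n+1) - Nat.nth (fun i => r i ∈ Sπ) n)
    rw [segSum_sub w r _ _ hlt.le] at hs
    have hlen : (1:ℝ) ≤ ((Nat.nth (fun i => r i ∈ Sπ) (n+1) - Nat.nth (fun i => r i ∈ Sπ) n : ℕ) : ℝ) := by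
      have : 1 ≤ Nat.nth (fun i => r i ∈ Sπ) (n+1) - Nat.nth (fun i => r i ∈ Sπ) n := by omega
      exact_mod_cast this
    rw [EReal.coe_le_coe_iff]
    nlinarith
  · exact le_top

end
end OptAux


namespace OptAux

set_option maxHeartbeats 1000000 in
lemma pump {V : Type*} [Fintype V]
    (E : V → V → Prop) (w : V → V → ℝ)
    (S0 F Sπ : Set V)
    (W : Finset ℝ) (hW : ∀ u v, w u v ∈ W)
    (wmin : ℝ) (hwmin : 0 < wmin) (hmle : ∀ u v, wmin ≤ w u v)
    (K : ℕ) (t t' : ℝ) (ht' : t' < t) (hK : t ≤ (K:ℝ) * wmin)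
    (r : ℕ → V) (hrun : IsRun E S0 r) (hacc : IsAccepting F r)
    (hcost : runCost w Sπ r < ((t' : ℝ) : EReal)) :
    ∃ ρ, IsRun E S0 ρ ∧ IsAccepting F ρ ∧ IsPrefixSuffix F ρ ∧
      runCost w Sπ ρ ≤ ((t : ℝ) : EReal) ∧ ∃ g ∈ GF W K, runCost w Sπ ρ = (g : EReal) := by
  classical
  -- basic facts about the given run
  have h_inf : {i | r i ∈ Sπ}.Infinite := by
    by_contra h
    rw [show runCost w Sπ r = ⊤ from by unfold runCost; rw [if_neg h]] at hcost
    exact not_top_lt hcost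
  have hlimsup : Filter.limsup
      (fun n => ((timeSeq w r (Nat.nth (fun i => r i ∈ Sπ) (n+1))
        - timeSeq w r (Nat.nth (fun i => r i ∈ Sπ) n) : ℝ) : EReal))
      Filter.atTop < ((t' : ℝ) : EReal) := by
    have h := hcost
    unfold runCost at h
    rwa [if_pos h_inf] at h
  have hev := Filter.eventually_lt_of_limsup_lt hlimsup
  rw [Filter.eventually_atTop] at hev
  obtain ⟨n0, hn0⟩ := hev
  have tmono : ∀ a b : ℕ, a ≤ b → timeSeq w r a ≤ timeSeq w r b := by
    intro a b hab
    have h1 := segSum_ge w r hmle a (b - a)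
    have h2 := segSum_sub w r a b hab
    have h3 : (0:ℝ) ≤ ((b-a:ℕ):ℝ) * wmin := by positivity
    linarith
  set Q1 := Nat.nth (fun i => r i ∈ Sπ) n0 with hQ1def
  have hQ1π : r Q1 ∈ Sπ := Nat.nth_mem_of_infinite h_inf n0
  have hgap : ∀ q q', Consec (fun i => r i ∈ Sπ) q q' → Q1 ≤ q →
      timeSeq w r q' - timeSeq w r q < t' := by
    intro q q' hc hq
    obtain ⟨k, hk, hkq, hkq'⟩ := consec_index h_inf hc hq
    have h := hn0 k hk
    rw [hkq, hkq'] at h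
    exact EReal.coe_lt_coe_iff.1 h
  -- an accepting state occurring infinitely often
  have hFinf : {n | r n ∈ F}.Infinite := infinite_of_unbounded (fun M => by
    obtain ⟨n, hn1, hn2⟩ := hacc M; exact ⟨n, hn1, hn2⟩)
  have hf : ∃ f, f ∈ F ∧ {n | r n = f}.Infinite := by
    by_contra hcon
    push_neg at hcon
    have hsub : {n | r n ∈ F} ⊆ ⋃ (f : V), {n | r n = f ∧ r n ∈ F} := fun n hn =>
      Set.mem_iUnion.2 ⟨r n, rfl, hn⟩
    have hfin : ∀ f : V, {n | r n = f ∧ r n ∈ F}.Finite := by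
      intro f
      by_cases hfF : f ∈ F
      · have h1 : {n | r n = f}.Finite := hcon f hfF
        exact h1.subset (fun n hn => hn.1)
      · have h2 : {n | r n = f ∧ r n ∈ F} = ∅ := by
          ext n
          simp only [Set.mem_setOf_eq, Set.mem_empty_iff_false, iff_false, not_and]
          intro h1 h2
          exact hfF (h1 ▸ h2)
        rw [h2]; exact Set.finite_empty
    exact hFinf ((Set.finite_iUnion hfin).subset hsub)
  obtain ⟨f, hfF, hfInf⟩ := hf
  -- occurrences of f beyond Q1
  have hSf_inf : (setOf (fun n => r n = f ∧ Q1 < n)).Infinite :=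
    infinite_of_unbounded (fun M => by
      obtain ⟨b, hbmem, hblt⟩ := hfInf.exists_gt (max M Q1)
      exact ⟨b, by omega, hbmem, by omega⟩)
  set a : ℕ → ℕ := fun l => Nat.nth (fun n => r n = f ∧ Q1 < n) l with hadef
  have haf : ∀ l, r (a l) = f ∧ Q1 < a l := fun l => Nat.nth_mem_of_infinite hSf_inf l
  have hamono : StrictMono a := Nat.nth_strictMono hSf_inf
  have haconsec : ∀ l, Consec (fun n => r n = f ∧ Q1 < n) (a l) (a (l+1)) :=
    fun l => consec_nth hSf_inf l
  have hnof : ∀ l m, a l < m → m < a (l+1) → r m ≠ f := by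
    intro l m h1 h2 hm
    exact (haconsec l).2.2.2 m h1 h2 ⟨hm, lt_trans (haf l).2 h1⟩
  have hloc : ∀ p L, a L ≤ p → ∃ l, L ≤ l ∧ a l ≤ p ∧ p < a (l+1) := by
    intro p L hL
    have hLp : L ≤ p := le_trans hamono.le_apply hL
    refine ⟨Nat.findGreatest (fun l => a l ≤ p) p, Nat.le_findGreatest (P := fun l => a l ≤ p) hLp hL,
      Nat.findGreatest_spec (P := fun l => a l ≤ p) hLp hL, ?_⟩
    by_contra hcon2
    push_neg at hcon2
    have h2 : Nat.findGreatest (fun l => a l ≤ p) p + 1 ≤ p := by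
      have h3 : Nat.findGreatest (fun l => a l ≤ p) p + 1 ≤
          a (Nat.findGreatest (fun l => a l ≤ p) p + 1) := hamono.le_apply
      omega
    exact Nat.findGreatest_is_greatest (P := fun l => a l ≤ p) (Nat.lt_succ_self _) h2 hcon2
  -- intervals between consecutive occurrences of f containing a π-position
  set hasπ : ℕ → Prop := fun l => ∃ q, a l ≤ q ∧ q < a (l+1) ∧ r q ∈ Sπ with hhasdef
  have hhas : ∀ L, ∃ l, L ≤ l ∧ hasπ l := by
    intro L
    obtain ⟨p, hp1, hp2⟩ := h_inf.exists_gt (a L)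
    obtain ⟨l, hl1, hl2, hl3⟩ := hloc p L hp2.le
    exact ⟨l, hl1, p, hl2, hl3, hp1⟩
  set eP : ℕ → ℕ := fun l => Nat.findGreatest (fun m => r m ∈ Sπ) (a (l+1) - 1) with hePdef
  have hQ1le : ∀ l, Q1 ≤ a (l+1) - 1 := fun l => by have := (haf (l+1)).2; omega
  have hePπ : ∀ l, r (eP l) ∈ Sπ := fun l => Nat.findGreatest_spec (P := fun m => r m ∈ Sπ) (hQ1le l) hQ1π
  have hePle : ∀ l, eP l ≤ a (l+1) - 1 := fun l => Nat.findGreatest_le _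
  have hePgr : ∀ l m, eP l < m → m ≤ a (l+1) - 1 → ¬ (r m ∈ Sπ) :=
    fun l m h1 h2 => Nat.findGreatest_is_greatest (P := fun m => r m ∈ Sπ) h1 h2
  have hePQ1 : ∀ l, Q1 ≤ eP l := fun l => Nat.le_findGreatest (P := fun m => r m ∈ Sπ) (hQ1le l) hQ1π
  set γ : ℕ → ℝ := fun l => timeSeq w r (a (l+1)) - timeSeq w r (eP l) with hγdef
  have hγ0 : ∀ l, 0 ≤ γ l := by
    intro l
    have h1 := tmono (eP l) (a (l+1)) (by have := hePle l; omega)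
    simp only [hγdef]
    linarith
  have hγlt : ∀ l, γ l < t' := by
    intro l
    obtain ⟨q', hq'⟩ := consec_exists h_inf (hePπ l)
    have hq'ge : a (l+1) ≤ q' := by
      by_contra hcon2
      push_neg at hcon2
      exact (hePgr l q' hq'.2.2.1 (by omega)) hq'.2.1
    have h1 := hgap _ _ hq' (hePQ1 l)
    have h2 := tmono (a (l+1)) q' hq'ge
    simp only [hγdef]
    linarith
  -- key step inequality
  have hstep : ∀ l, hasπ l → ∀ l', ∀ hl' : hasπ l', l < l' →
      (∀ l'', l < l'' → l'' < l' → ¬ hasπ l'') →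
      γ l + (timeSeq w r (Nat.find hl') - timeSeq w r (a l')) < t' := by
    intro l hl l' hl' hll' hbetween
    obtain ⟨hs1, hs2, hs3⟩ := Nat.find_spec hl'
    have hconsec : Consec (fun i => r i ∈ Sπ) (eP l) (Nat.find hl') := by
      refine ⟨hePπ l, hs3, ?_, ?_⟩
      · have h1 := hePle l
        have h2 : a (l+1) ≤ a l' := hamono.monotone (by omega)
        have h3 : Q1 < a (l+1) := (haf (l+1)).2
        omega
      · intro m hm1 hm2 hmπ
        by_cases hc1 : m ≤ a (l+1) - 1
        · exact hePgr l m hm1 hc1 hmπ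
        · by_cases hc2 : m < a l'
          · have h3 : Q1 < a (l+1) := (haf (l+1)).2
            have hge : a (l+1) ≤ m := by omega
            obtain ⟨l'', hl''1, hl''2, hl''3⟩ := hloc m (l+1) hge
            have hl''lt : l'' < l' := by
              by_contra hcon2
              push_neg at hcon2
              have := hamono.monotone hcon2
              omega
            exact hbetween l'' (by omega) hl''lt ⟨m, hl''2, hl''3, hmπ⟩
          · have h4 := Nat.find_min hl' (show m < Nat.find hl' by omega)
            exact h4 ⟨by omega, by omega, hmπ⟩
    have hga := hgap _ _ hconsec (hePQ1 l)
    have h1 := tmono (a (l+1)) (a l') (hamono.monotone (by omega : l + 1 ≤ l'))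
    have h2 := tmono (a l') (Nat.find hl') hs1
    simp only [hγdef]
    linarith
  -- there is a "good" cycle
  have hnotbad : ∃ l, ∃ hl : hasπ l,
      (timeSeq w r (Nat.find hl) - timeSeq w r (a l)) + γ l ≤ t := by
    by_contra hbad
    push_neg at hbad
    have hchain : ∀ m : ℕ, ∃ l, ∃ hl : hasπ l, (m : ℝ) * (t - t') ≤ γ l := by
      intro m
      induction m with
      | zero =>
        obtain ⟨l, _, hl⟩ := hhas 0
        exact ⟨l, hl, by simpa using hγ0 l⟩
      | succ m ihm =>
        obtain ⟨l, hl, hγl⟩ := ihm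
        have hex : ∃ l', l < l' ∧ hasπ l' := by
          obtain ⟨l', h1, h2⟩ := hhas (l+1)
          exact ⟨l', by omega, h2⟩
        obtain ⟨hll', hl'⟩ := Nat.find_spec hex
        have hmin : ∀ l'', l < l'' → l'' < Nat.find hex → ¬ hasπ l'' := by
          intro l'' h1 h2 h3
          exact (Nat.find_min hex h2) ⟨h1, h3⟩
        have h1 := hstep l hl (Nat.find hex) hl' hll' hmin
        have h2 := hbad (Nat.find hex) hl'
        refine ⟨Nat.find hex, hl', ?_⟩
        push_cast
        linarith
    obtain ⟨l, hl, hγl⟩ := hchain (⌈t' / (t - t')⌉₊)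
    have hδ : 0 < t - t' := by linarith
    have hup : t' ≤ (⌈t' / (t - t')⌉₊ : ℝ) * (t - t') := by
      by_cases hc : t' ≤ 0
      · have h0 : (0:ℝ) ≤ (⌈t' / (t - t')⌉₊ : ℝ) * (t - t') := by positivity
        linarith
      · push_neg at hc
        have h1 := Nat.le_ceil (t' / (t - t'))
        calc t' = (t' / (t - t')) * (t - t') := by field_simp
        _ ≤ _ := by nlinarith
    exact lt_irrefl t' (lt_of_le_of_lt (hup.trans hγl) (hγlt l))
  obtain ⟨lst, hlst, hwrap⟩ := hnotbad
  -- the cycle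
  have hij : a lst < a (lst+1) := hamono (Nat.lt_succ_self lst)
  set i := a lst with hidef
  set j := a (lst+1) with hjdef
  set T := j - i with hTdef
  have hT0 : 0 < T := by omega
  obtain ⟨hs1, hs2, hs3⟩ := Nat.find_spec hlst
  set sst := Nat.find hlst with hsstdef
  have hsmin : ∀ m, m < sst → ¬ (i ≤ m ∧ m < j ∧ r m ∈ Sπ) := fun m hm => Nat.find_min hlst hm
  have hrif : r i = f := (haf lst).1
  have hrjf : r j = f := (haf (lst+1)).1
  have hQ1i : Q1 < i := (haf lst).2
  have hfex : ∃ n, r n = f := ⟨i, hrif⟩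
  set N := Nat.find hfex with hNdef
  have hNf : r N = f := Nat.find_spec hfex
  have hNle : N ≤ i := Nat.find_min' hfex hrif
  set ρ : ℕ → V := fun n => if n < N then r n else r (i + (n - N) % T) with hρdef
  have hρpre : ∀ n, n < N → ρ n = r n := fun n hn => by simp only [hρdef, if_pos hn]
  have hρtail : ∀ x : ℕ, ρ (N + x) = r (i + x % T) := by
    intro x
    simp only [hρdef]
    rw [if_neg (by omega), Nat.add_sub_cancel_left]
  have hρ2 : ∀ x, x ≤ T → ρ (N + x) = r (i + x) := by
    intro x hx
    rcases Nat.lt_or_ge x T with h | h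
    · rw [hρtail, Nat.mod_eq_of_lt h]
    · have hxT : x = T := by omega
      subst hxT
      have hiT : i + T = j := by omega
      rw [hρtail, Nat.mod_self, Nat.add_zero, hiT, hrif, hrjf]
  have hρN : ρ N = r i := by
    have h := hρ2 0 (by omega)
    simpa using h
  have hperiod : ∀ n, N ≤ n → ρ (n + T) = ρ n := by
    intro n hn
    have h1 : n + T = N + ((n - N) + T) := by omega
    have h2 : n = N + (n - N) := by omega
    rw [h1, hρtail, Nat.add_mod_right]
    conv_rhs => rw [h2, hρtail]
  have hρrun : IsRun E S0 ρ := by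
    constructor
    · rcases Nat.eq_zero_or_pos N with h0 | h0
      · have e1 : ρ 0 = r i := by rw [show (0:ℕ) = N from h0.symm, hρN]
        have e2 : r i = r 0 := by rw [hrif, show (0:ℕ) = N from h0.symm, hNf]
        rw [e1, e2]
        exact hrun.1
      · rw [hρpre 0 h0]
        exact hrun.1
    · intro n
      rcases Nat.lt_or_ge (n+1) N with hc | hc
      · rw [hρpre n (by omega), hρpre (n+1) hc]
        exact hrun.2 n
      · rcases Nat.lt_or_ge n N with hc2 | hc2
        · have hn1 : n + 1 = N := by omega
          rw [hρpre n hc2, hn1, hρN]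
          have e : r i = r (n+1) := by rw [hrif, hn1, hNf]
          rw [e]
          exact hrun.2 n
        · have hx : n = N + (n - N) := by omega
          have hlt : (n - N) % T < T := Nat.mod_lt _ hT0
          have e1 : ρ n = r (i + (n - N) % T) := by
            conv_lhs => rw [hx, hρtail]
          have e2 : ρ (n + 1) = r (i + ((n - N) + 1) % T) := by
            have h5 : n + 1 = N + ((n - N) + 1) := by omega
            rw [h5, hρtail]
          have hkey : ((n - N) + 1) % T = ((n - N) % T + 1) % T := by
            conv_lhs => rw [show (n - N) + 1 = (n - N) % T + 1 + T * ((n - N) / T) from by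
              have := Nat.mod_add_div (n - N) T; omega]
            rw [Nat.add_mul_mod_self_left]
          rcases Nat.lt_or_ge ((n - N) % T + 1) T with h | h
          · rw [e1, e2, hkey, Nat.mod_eq_of_lt h,
              show i + ((n - N) % T + 1) = (i + (n - N) % T) + 1 from by omega]
            exact hrun.2 _
          · have hTeq : (n - N) % T + 1 = T := by omega
            rw [e1, e2, hkey, hTeq, Nat.mod_self, Nat.add_zero]
            have hj' : (i + (n - N) % T) + 1 = j := by omega
            rw [show r i = r ((i + (n - N) % T) + 1) from by rw [hj', hrjf, hrif]]
            exact hrun.2 (i + (n - N) % T)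
  have hρacc : IsAccepting F ρ := by
    intro M
    have hMT : M ≤ M * T := Nat.le_mul_of_pos_right M hT0
    refine ⟨N + M * T, by omega, ?_⟩
    rw [hρtail, Nat.mul_mod_left, Nat.add_zero, hrif]
    exact hfF
  have hρps : IsPrefixSuffix F ρ := by
    refine ⟨N, T, hT0, ?_, ?_, fun n hn => hperiod n hn, ?_⟩
    · rw [hρN, hrif]; exact hfF
    · intro m hm
      rw [hρpre m hm, hρN, hrif]
      exact Nat.find_min hfex hm
    · intro m hm1 hm2
      rw [hρN, hrif]
      have hx : m = N + (m - N) := by omega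
      have hx2 : m - N < T := by omega
      rw [hx, hρ2 (m - N) hx2.le]
      exact hnof lst (i + (m - N)) (by omega) (by omega)
  set k0 := sst - i with hk0def
  have hk0T : k0 < T := by omega
  have hik0 : i + k0 = sst := by omega
  have hρinf : {n | ρ n ∈ Sπ}.Infinite := infinite_of_unbounded (fun M => by
    have hMT : M ≤ M * T := Nat.le_mul_of_pos_right M hT0
    refine ⟨N + (k0 + M * T), by omega, ?_⟩
    show ρ (N + (k0 + M * T)) ∈ Sπ
    rw [hρtail, Nat.add_mul_mod_self_right, Nat.mod_eq_of_lt hk0T, hik0]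
    exact hs3)
  -- every gap of ρ in the periodic part is at most t
  have hmain : ∀ q, N ≤ q → ∀ q', Consec (fun n => ρ n ∈ Sπ) q q' →
      segSum w ρ q (q' - q) ≤ t := by
    intro q
    induction q using Nat.strong_induction_on with
    | _ q IH =>
    intro hNq q' hc
    by_cases hbig : N + T ≤ q
    · have hq'q : q < q' := hc.2.2.1
      have hq0N : N ≤ q - T := by omega
      have hcshift : Consec (fun n => ρ n ∈ Sπ) (q - T) (q' - T) := by
        refine ⟨?_, ?_, by omega, ?_⟩
        · show ρ (q - T) ∈ Sπ
          have h5 := hperiod (q - T) hq0N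
          rw [show q - T + T = q from by omega] at h5
          rw [← h5]; exact hc.1
        · show ρ (q' - T) ∈ Sπ
          have h5 := hperiod (q' - T) (by omega)
          rw [show q' - T + T = q' from by omega] at h5
          rw [← h5]; exact hc.2.1
        · intro m h1 h2 hm
          have h5 := hperiod m (by omega)
          exact hc.2.2.2 (m + T) (by omega) (by omega) (by show ρ (m+T) ∈ Sπ; rw [h5]; exact hm)
      have hle := IH (q - T) (by omega) hq0N (q' - T) hcshift
      have heq : segSum w ρ q (q' - q) = segSum w ρ (q - T) (q' - T - (q - T)) := by
        rw [show q' - T - (q - T) = q' - q from by omega]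
        apply segSum_congr
        intro x hx
        have h5 := hperiod (q - T + x) (by omega)
        rw [show q - T + x + T = q + x from by omega] at h5
        exact h5
      rw [heq]
      exact hle
    · have hkT : q - N < T := by omega
      have hqNk : q = N + (q - N) := by omega
      have hπk : r (i + (q - N)) ∈ Sπ := by
        have h1 : ρ q ∈ Sπ := hc.1
        rw [hqNk, hρ2 (q - N) hkT.le] at h1
        exact h1
      by_cases hex2 : ∃ x, q - N < x ∧ x < T ∧ r (i + x) ∈ Sπ
      · obtain ⟨hk2a, hk2b, hk2c⟩ := Nat.find_spec hex2
        have hcc : Consec (fun n => ρ n ∈ Sπ) q (N + Nat.find hex2) := by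
          refine ⟨hc.1, ?_, by omega, ?_⟩
          · show ρ (N + Nat.find hex2) ∈ Sπ
            rw [hρ2 (Nat.find hex2) hk2b.le]
            exact hk2c
          · intro m h1 h2 hm
            have hx : m = N + (m - N) := by omega
            have h5 := Nat.find_min hex2 (show m - N < Nat.find hex2 by omega)
            rw [hx, hρ2 (m - N) (by omega)] at hm
            exact h5 ⟨by omega, by omega, hm⟩
        have hq' : q' = N + Nat.find hex2 := consec_unique hc hcc
        have heq : segSum w ρ q (q' - q) = segSum w r (i + (q - N)) (Nat.find hex2 - (q - N)) := by
          rw [hq', show N + Nat.find hex2 - q = Nat.find hex2 - (q - N) from by omega]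
          apply segSum_congr
          intro x hx
          rw [show q + x = N + ((q - N) + x) from by omega, hρ2 ((q - N)+x) (by omega),
            show i + ((q - N)+x) = i + (q - N) + x from by omega]
        have hcr : Consec (fun n => r n ∈ Sπ) (i + (q - N)) (i + Nat.find hex2) := by
          refine ⟨hπk, hk2c, by omega, ?_⟩
          intro m h1 h2 hm
          refine (Nat.find_min hex2 (show m - i < Nat.find hex2 by omega))
            ⟨by omega, by omega, ?_⟩
          rw [show i + (m - i) = m from by omega]
          exact hm
        have hgb := hgap _ _ hcr (by omega)
        have hseg : segSum w r (i + (q - N)) (Nat.find hex2 - (q - N)) =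
            timeSeq w r (i + Nat.find hex2) - timeSeq w r (i + (q - N)) := by
          have h5 := segSum_sub w r (i + (q - N)) (i + Nat.find hex2) (by omega)
          rw [show i + Nat.find hex2 - (i + (q - N)) = Nat.find hex2 - (q - N) from by omega] at h5
          exact h5
        rw [heq, hseg]
        linarith
      · push_neg at hex2
        have hk0min : ∀ x, x < k0 → ¬ (r (i + x) ∈ Sπ) := by
          intro x hx hxs
          exact (hsmin (i + x) (by omega)) ⟨by omega, by omega, hxs⟩
        have hcc : Consec (fun n => ρ n ∈ Sπ) q (N + (T + k0)) := by
          refine ⟨hc.1, ?_, by omega, ?_⟩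
          · show ρ (N + (T + k0)) ∈ Sπ
            rw [hρtail, show (T + k0) % T = k0 % T from by
                rw [show T + k0 = k0 + T from by omega, Nat.add_mod_right],
              Nat.mod_eq_of_lt hk0T, hik0]
            exact hs3
          · intro m h1 h2 hm
            rcases Nat.lt_or_ge m (N + T) with hcase | hcase
            · have hx : m = N + (m - N) := by omega
              have h4 : m - N < T := by omega
              rw [hx, hρ2 (m - N) h4.le] at hm
              exact hex2 (m - N) (by omega) h4 hm
            · have hx : m = N + (T + (m - N - T)) := by omega
              have h4 : m - N - T < k0 := by omega
              rw [hx, hρtail, show (T + (m - N - T)) % T = (m - N - T) % T from by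
                  rw [show T + (m - N - T) = (m - N - T) + T from by omega, Nat.add_mod_right],
                Nat.mod_eq_of_lt (by omega)] at hm
              exact hk0min _ h4 hm
        have hq' : q' = N + (T + k0) := consec_unique hc hcc
        have hlen : q' - q = (T - (q - N)) + k0 := by omega
        rw [hlen, segSum_split]
        have hp1 : segSum w ρ q (T - (q - N)) = timeSeq w r j - timeSeq w r (i + (q - N)) := by
          have hcg : segSum w ρ q (T - (q - N)) = segSum w r (i + (q - N)) (T - (q - N)) := by
            apply segSum_congr
            intro x hx
            rw [show q + x = N + ((q - N) + x) from by omega, hρ2 ((q - N) + x) (by omega),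
              show i + ((q - N) + x) = i + (q - N) + x from by omega]
          rw [hcg]
          have h5 := segSum_sub w r (i + (q - N)) j (by omega)
          rw [show j - (i + (q - N)) = T - (q - N) from by omega] at h5
          exact h5
        have hp2 : segSum w ρ (q + (T - (q - N))) k0 = timeSeq w r sst - timeSeq w r i := by
          have hcg : segSum w ρ (q + (T - (q - N))) k0 = segSum w r i k0 := by
            apply segSum_congr
            intro x hx
            have hxT : x < T := by omega
            rw [show q + (T - (q - N)) + x = N + (T + x) from by omega, hρtail,
              show (T + x) % T = x % T from by
                rw [show T + x = x + T from by omega, Nat.add_mod_right],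
              Nat.mod_eq_of_lt hxT]
          rw [hcg]
          have h5 := segSum_sub w r i sst (by omega)
          rw [show sst - i = k0 from rfl] at h5
          exact h5
        rw [hp1, hp2]
        have hePk : eP lst ≤ i + (q - N) := by
          by_contra hcon2
          push_neg at hcon2
          have h1 : eP lst ≤ j - 1 := hePle lst
          have hePge : sst ≤ eP lst := Nat.le_findGreatest (P := fun m => r m ∈ Sπ) (by omega) hs3
          have hePmem : r (i + (eP lst - i)) ∈ Sπ := by
            rw [show i + (eP lst - i) = eP lst from by omega]; exact hePπ lst
          exact hex2 (eP lst - i) (by omega) (by omega) hePmem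
        have hmle2 := tmono (eP lst) (i + (q - N)) hePk
        have hγval : γ lst = timeSeq w r j - timeSeq w r (eP lst) := rfl
        linarith
  -- conclude: the cost of ρ is a sum of at most K weights, and at most t
  set SA : Set EReal := {x | ∃ g ∈ GF W K, x = (g : EReal) ∧ g ≤ t} with hSAdef
  have hSAfin : SA.Finite := by
    apply Set.Finite.subset ((GF W K).finite_toSet.image (fun g : ℝ => (g : EReal)))
    rintro x ⟨g, hg, hx, _⟩
    exact ⟨g, hg, hx.symm⟩
  have hevmem : ∀ᶠ m in Filter.atTop,
      ((timeSeq w ρ (Nat.nth (fun n => ρ n ∈ Sπ) (m+1))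
        - timeSeq w ρ (Nat.nth (fun n => ρ n ∈ Sπ) m) : ℝ) : EReal) ∈ SA := by
    rw [Filter.eventually_atTop]
    refine ⟨N, fun m hm => ?_⟩
    have hqN : N ≤ Nat.nth (fun n => ρ n ∈ Sπ) m :=
      le_trans hm (Nat.nth_strictMono hρinf).le_apply
    have hcons : Consec (fun n => ρ n ∈ Sπ) (Nat.nth (fun n => ρ n ∈ Sπ) m)
      (Nat.nth (fun n => ρ n ∈ Sπ) (m+1)) := consec_nth hρinf m
    have hle := hmain _ hqN _ hcons
    have hseg := segSum_sub w ρ (Nat.nth (fun n => ρ n ∈ Sπ) m)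
      (Nat.nth (fun n => ρ n ∈ Sπ) (m+1)) hcons.2.2.1.le
    have hlenK : Nat.nth (fun n => ρ n ∈ Sπ) (m+1) - Nat.nth (fun n => ρ n ∈ Sπ) m ≤ K := by
      by_contra hcon2
      push_neg at hcon2
      have h1 := segSum_ge w ρ hmle (Nat.nth (fun n => ρ n ∈ Sπ) m)
        (Nat.nth (fun n => ρ n ∈ Sπ) (m+1) - Nat.nth (fun n => ρ n ∈ Sπ) m)
      have h2 : (K:ℝ) + 1 ≤ ((Nat.nth (fun n => ρ n ∈ Sπ) (m+1)
          - Nat.nth (fun n => ρ n ∈ Sπ) m : ℕ) : ℝ) := by exact_mod_cast hcon2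
      nlinarith
    have hmem := segSum_mem_GF w ρ hW K (Nat.nth (fun n => ρ n ∈ Sπ) m)
      (Nat.nth (fun n => ρ n ∈ Sπ) (m+1) - Nat.nth (fun n => ρ n ∈ Sπ) m) hlenK
    exact ⟨segSum w ρ (Nat.nth (fun n => ρ n ∈ Sπ) m)
      (Nat.nth (fun n => ρ n ∈ Sπ) (m+1) - Nat.nth (fun n => ρ n ∈ Sπ) m), hmem,
      by rw [hseg], hle⟩
  have hcosteq : runCost w Sπ ρ = Filter.limsup
      (fun m => ((timeSeq w ρ (Nat.nth (fun n => ρ n ∈ Sπ) (m+1))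
        - timeSeq w ρ (Nat.nth (fun n => ρ n ∈ Sπ) m) : ℝ) : EReal)) Filter.atTop := by
    unfold runCost
    rw [if_pos hρinf]
  have hlim := limsup_mem_of_eventually_mem hSAfin hevmem
  rw [← hcosteq] at hlim
  obtain ⟨g, hgGF, hxeq, hgle⟩ := hlim
  exact ⟨ρ, hρrun, hρacc, hρps, by rw [hxeq]; exact EReal.coe_le_coe_iff.2 hgle, g, hgGF, hxeq⟩

end OptAux

/-- If some accepting run of the (finite) product automaton has
finite cost, then there exists an accepting run in prefix-suffix structure whose
cost is at most the infimum of the costs of all accepting runs. -/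
theorem exists_optimal_prefix_suffix_run
    {V : Type*} [Fintype V]
    (E : V → V → Prop) (w : V → V → ℝ) (hw : ∀ u v, 0 < w u v)
    (S0 F Sπ : Set V)
    (hex : ∃ r : ℕ → V, IsRun E S0 r ∧ IsAccepting F r ∧ runCost w Sπ r < ⊤) :
    ∃ ρ : ℕ → V, IsRun E S0 ρ ∧ IsAccepting F ρ ∧ IsPrefixSuffix F ρ ∧
      runCost w Sπ ρ ≤
        sInf {c : EReal | ∃ r : ℕ → V, IsRun E S0 r ∧ IsAccepting F r ∧ runCost w Sπ r = c} := by
  classical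
  open OptAux in
  obtain ⟨r0, hr0run, hr0acc, hr0cost⟩ := hex
  set S : Set EReal :=
    {c : EReal | ∃ r : ℕ → V, IsRun E S0 r ∧ IsAccepting F r ∧ runCost w Sπ r = c} with hSdef
  have hSne : runCost w Sπ r0 ∈ S := ⟨r0, hr0run, hr0acc, rfl⟩
  have hV : Nonempty V := ⟨r0 0⟩
  set W : Finset ℝ := Finset.image (fun p : V × V => w p.1 p.2) Finset.univ with hWdef
  have hWne : W.Nonempty :=
    ⟨w (r0 0) (r0 0), Finset.mem_image.2 ⟨(r0 0, r0 0), Finset.mem_univ _, rfl⟩⟩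
  set wmin := W.min' hWne with hwmindef
  have hWmem : ∀ u v, w u v ∈ W := fun u v =>
    Finset.mem_image.2 ⟨(u, v), Finset.mem_univ _, rfl⟩
  have hmle : ∀ u v, wmin ≤ w u v := fun u v => Finset.min'_le _ _ (hWmem u v)
  have hwmin : 0 < wmin := by
    obtain ⟨p, _, hpe⟩ := Finset.mem_image.1 (W.min'_mem hWne)
    rw [hwmindef, ← hpe]
    exact hw p.1 p.2
  have hlow : ∀ x ∈ S, ((wmin : ℝ) : EReal) ≤ x := by
    rintro x ⟨r, _, _, hr⟩
    rw [← hr]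
    exact OptAux.runCost_ge w r Sπ hwmin.le hmle
  have hcinf_le : sInf S ≤ runCost w Sπ r0 := sInf_le hSne
  have hcinf_lt_top : sInf S < ⊤ := lt_of_le_of_lt hcinf_le hr0cost
  have hcinf_ge : ((wmin : ℝ) : EReal) ≤ sInf S := le_sInf hlow
  have hne_top : sInf S ≠ ⊤ := hcinf_lt_top.ne
  have hne_bot : sInf S ≠ ⊥ := by
    intro h
    rw [h, le_bot_iff] at hcinf_ge
    exact (EReal.coe_ne_bot wmin) hcinf_ge
  set creal := (sInf S).toReal with hcrealdef
  have hcc : ((creal : ℝ) : EReal) = sInf S := EReal.coe_toReal hne_top hne_bot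
  set K := ⌈(creal + 1) / wmin⌉₊ with hKdef
  have hK : creal + 1 ≤ (K : ℝ) * wmin := by
    have h1 := Nat.le_ceil ((creal + 1) / wmin)
    calc creal + 1 = ((creal + 1) / wmin) * wmin := by field_simp
    _ ≤ (K : ℝ) * wmin := by rw [hKdef]; nlinarith
  set A : Set EReal := {x | (∃ g ∈ OptAux.GF W K, x = (g : EReal)) ∧
    ∃ ρ, IsRun E S0 ρ ∧ IsAccepting F ρ ∧ IsPrefixSuffix F ρ ∧ runCost w Sπ ρ = x} with hAdef
  have hAfin : A.Finite := by
    apply Set.Finite.subset ((OptAux.GF W K).finite_toSet.image (fun g : ℝ => (g : EReal)))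
    rintro x ⟨⟨g, hg, hx⟩, _⟩
    exact ⟨g, hg, hx.symm⟩
  have hpump : ∀ tt : ℝ, creal < tt → tt ≤ creal + 1 → ∃ x ∈ A, x ≤ ((tt : ℝ) : EReal) := by
    intro tt h1 h2
    have hmid1 : creal < (creal + tt) / 2 := by linarith
    have hmid2 : (creal + tt) / 2 < tt := by linarith
    have hlt : sInf S < (((creal + tt) / 2 : ℝ) : EReal) := by
      rw [← hcc]
      exact_mod_cast hmid1
    obtain ⟨x, hxS, hxlt⟩ := sInf_lt_iff.1 hlt
    obtain ⟨r, hrrun, hracc, hrc⟩ := hxS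
    rw [← hrc] at hxlt
    obtain ⟨ρ, h1', h2', h3', h4', g, hg, hc'⟩ :=
      OptAux.pump E w S0 F Sπ W hWmem wmin hwmin hmle K tt ((creal + tt) / 2)
        hmid2 (le_trans h2 hK) r hrrun hracc hxlt
    exact ⟨runCost w Sπ ρ, ⟨⟨g, hg, hc'⟩, ρ, h1', h2', h3', rfl⟩, h4'⟩
  have hAne : A.Nonempty := by
    obtain ⟨x, hx, _⟩ := hpump (creal + 1) (by linarith) le_rfl
    exact ⟨x, hx⟩
  obtain ⟨xm, hxmA, hxmmin⟩ := Set.exists_min_image A id hAfin hAne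
  have hxm_le : xm ≤ sInf S := by
    by_contra hlt
    push_neg at hlt
    have h1 : sInf S < min xm (((creal + 1 : ℝ)) : EReal) := by
      apply lt_min hlt
      rw [← hcc]
      exact_mod_cast (by linarith : creal < creal + 1)
    obtain ⟨y, hy1, hy2⟩ := exists_between h1
    have hy2a : y < xm := lt_of_lt_of_le hy2 (min_le_left _ _)
    have hy2b : y < ((creal + 1 : ℝ) : EReal) := lt_of_lt_of_le hy2 (min_le_right _ _)
    have hynb : y ≠ ⊥ := by
      rintro rfl
      exact not_lt_bot hy1
    have hynt : y ≠ ⊤ := by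
      rintro rfl
      exact not_top_lt hy2b
    have hyc : ((y.toReal : ℝ) : EReal) = y := EReal.coe_toReal hynt hynb
    have hyr1 : creal < y.toReal := by
      rw [← hyc, ← hcc] at hy1
      exact_mod_cast hy1
    have hyr2 : y.toReal ≤ creal + 1 := by
      rw [← hyc] at hy2b
      exact le_of_lt (EReal.coe_lt_coe_iff.1 hy2b)
    obtain ⟨x, hxA, hxle⟩ := hpump y.toReal hyr1 hyr2
    have hxmx : xm ≤ x := hxmmin x hxA
    rw [hyc] at hxle
    exact absurd (lt_of_le_of_lt (hxmx.trans hxle) hy2a) (lt_irrefl xm)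
  obtain ⟨_, ρ, hρ1, hρ2, hρ3, hρ4⟩ := hxmA
  exact ⟨ρ, hρ1, hρ2, hρ3, by rw [hρ4]; exact hxm_le⟩
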